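/- Let n ≥ 1, let p be a real with 0 < p ≤ 1, and let a_1, …, a_n ∈ {0, 1, 2} be such that 1/2 = p/2^{n+1} + ∑_{i=1}^{n} a_i/2^{i+1}. Then p = 1 and a_i = 1 for all i = 1, …, n. -/

import Mathlib

open Finset

lemma geom_Icc (n : ℕ) : ∑ i ∈ Finset.Icc 1 n, (2:ℤ) ^ (n - i) = 2 ^ n - 1 := by
  induction n with
  | zero => simp
  | succ n ih =>
    rw [Finset.sum_Icc_succ_top (by omega)]
    have : ∑ i ∈ Finset.Icc 1 n, (2:ℤ) ^ (n + 1 - i) =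
        2 * ∑ i ∈ Finset.Icc 1 n, (2:ℤ) ^ (n - i) := by
      rw [Finset.mul_sum]
      refine Finset.sum_congr rfl fun i hi => ?_
      have hi' := Finset.mem_Icc.mp hi
      rw [show n + 1 - i = (n - i) + 1 by omega, pow_succ]; ring
    rw [this, ih, show n + 1 - (n+1) = 0 by omega, pow_zero, pow_succ]; ring

lemma signed_binary (n : ℕ) (b : ℕ → ℤ)
    (hb : ∀ i ∈ Finset.Icc 1 n, b i = -1 ∨ b i = 0 ∨ b i = 1)
    (h : ∑ i ∈ Finset.Icc 1 n, b i * 2 ^ (n - i) = 0) :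
    ∀ i ∈ Finset.Icc 1 n, b i = 0 := by
  induction n with
  | zero => simp
  | succ n ih =>
    rw [Finset.sum_Icc_succ_top (by omega)] at h
    have hsum : ∑ i ∈ Finset.Icc 1 n, b i * 2 ^ (n + 1 - i) =
        2 * ∑ i ∈ Finset.Icc 1 n, b i * 2 ^ (n - i) := by
      rw [Finset.mul_sum]
      refine Finset.sum_congr rfl fun i hi => ?_
      have hi' := Finset.mem_Icc.mp hi
      rw [show n + 1 - i = (n - i) + 1 by omega, pow_succ]; ring
    rw [hsum, show n + 1 - (n+1) = 0 by omega, pow_zero, mul_one] at h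
    have hlast : b (n+1) = -1 ∨ b (n+1) = 0 ∨ b (n+1) = 1 := by
      apply hb; simp
    have hb0 : b (n+1) = 0 := by omega
    have hS : ∑ i ∈ Finset.Icc 1 n, b i * 2 ^ (n - i) = 0 := by omega
    have ih' := ih (fun j hj => hb j (by
      have := Finset.mem_Icc.mp hj; exact Finset.mem_Icc.mpr (by omega))) hS
    intro i hi
    have hi' := Finset.mem_Icc.mp hi
    rcases eq_or_lt_of_le hi'.2 with heq | hlt
    · rw [heq]; exact hb0
    · exact ih' i (Finset.mem_Icc.mpr (by omega))

theorem stmt_2 (n : ℕ) (hn : 1 ≤ n) (p : ℝ) (hp : 0 < p) (hp1 : p ≤ 1)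
    (a : ℕ → ℝ) (ha : ∀ i ∈ Finset.Icc 1 n, a i = 0 ∨ a i = 1 ∨ a i = 2)
    (heq : (1 : ℝ) / 2 = p / 2 ^ (n + 1) + ∑ i ∈ Finset.Icc 1 n, a i / 2 ^ (i + 1)) :
    p = 1 ∧ ∀ i ∈ Finset.Icc 1 n, a i = 1 := by
  classical
  -- Multiply the equation by 2^(n+1)
  have key : (2:ℝ) ^ n = p + ∑ i ∈ Finset.Icc 1 n, a i * 2 ^ (n - i) := by
    have h2 : (2:ℝ) ^ (n+1) ≠ 0 := by positivity
    calc (2:ℝ) ^ n = (1/2) * 2 ^ (n+1) := by rw [pow_succ]; ring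
    _ = (p / 2 ^ (n + 1) + ∑ i ∈ Finset.Icc 1 n, a i / 2 ^ (i + 1)) * 2 ^ (n+1) := by
        rw [← heq]
    _ = p + ∑ i ∈ Finset.Icc 1 n, a i * 2 ^ (n - i) := by
        rw [add_mul, div_mul_cancel₀ _ h2, Finset.sum_mul]
        congr 1
        refine Finset.sum_congr rfl fun i hi => ?_
        have hi' := Finset.mem_Icc.mp hi
        have hsplit : (2:ℝ) ^ (n+1) = 2 ^ (i+1) * 2 ^ (n - i) := by
          rw [← pow_add]; congr 1; omega
        have h2i : (2:ℝ) ^ (i+1) ≠ 0 := by positivity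
        rw [hsplit]; field_simp
  -- integer digits
  set c : ℕ → ℤ := fun i => if a i = 0 then 0 else if a i = 1 then 1 else 2 with hc
  have hac : ∀ i ∈ Finset.Icc 1 n, a i = (c i : ℝ) := by
    intro i hi
    rcases ha i hi with h | h | h <;> simp [hc, h]
  have hcrange : ∀ i ∈ Finset.Icc 1 n, c i = 0 ∨ c i = 1 ∨ c i = 2 := by
    intro i hi
    rcases ha i hi with h | h | h <;> simp [hc, h]
  set T : ℤ := ∑ i ∈ Finset.Icc 1 n, c i * 2 ^ (n - i) with hT
  have hTr : ∑ i ∈ Finset.Icc 1 n, a i * 2 ^ (n - i) = (T : ℝ) := by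
    rw [hT]; push_cast
    exact Finset.sum_congr rfl fun i hi => by rw [hac i hi]
  rw [hTr] at key
  -- bounds on T
  have hT1 : ((2:ℤ) ^ n - 1 : ℝ) ≤ (T : ℝ) := by push_cast; linarith
  have hT2 : (T : ℝ) < ((2:ℤ) ^ n : ℝ) := by push_cast; linarith
  have hTval : T = 2 ^ n - 1 := by
    have h1 : (2:ℤ) ^ n - 1 ≤ T := by exact_mod_cast hT1
    have h2 : T < (2:ℤ) ^ n := by exact_mod_cast hT2
    omega
  have hpval : p = 1 := by
    have : (T : ℝ) = 2 ^ n - 1 := by rw [hTval]; push_cast; ring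
    rw [this] at key; linarith
  refine ⟨hpval, ?_⟩
  -- now the signed binary part
  have hbsum : ∑ i ∈ Finset.Icc 1 n, (c i - 1) * 2 ^ (n - i) = 0 := by
    have : ∑ i ∈ Finset.Icc 1 n, (c i - 1) * 2 ^ (n - i)
        = T - ∑ i ∈ Finset.Icc 1 n, (2:ℤ) ^ (n - i) := by
      rw [hT, ← Finset.sum_sub_distrib]
      exact Finset.sum_congr rfl fun i hi => by ring
    rw [this, geom_Icc, hTval]; ring
  have hb := signed_binary n (fun i => c i - 1)
    (fun i hi => by rcases hcrange i hi with h | h | h <;> simp [h])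
    hbsum
  intro i hi
  have h0 : c i - 1 = 0 := hb i hi
  have hci : c i = 1 := by omega
  rw [hac i hi, hci]; norm_num
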